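/- Let F_3 = ⟨a,b,c⟩ and w = c²a²b²a²b²c². Then the elements wa⁻¹, awb, w form a basis of the subgroup H = ⟨a, b, w⟩, and in particular K = ⟨wa⁻¹, awb⟩ is a free factor of H of rank 2. -/
import Mathlib


/-- `s` is a free basis of the group `G`: the induced map from the free group is bijective. -/
def IsFreeBasis {G : Type} [Group G] {ι : Type} (s : ι → G) : Prop :=
  Function.Bijective (FreeGroup.lift s)

/-- `s` is a free basis of the subgroup `H` of `G`. -/
def IsBasisOf {G : Type} [Group G] {ι : Type} (s : ι → G) (H : Subgroup G) : Prop :=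
  Function.Injective (FreeGroup.lift s) ∧ Subgroup.closure (Set.range s) = H

/-- `A` is a free factor of `G`: `G` is the internal free product of `A` with some subgroup `B`. -/
def IsFreeFactor {G : Type} [Group G] (A : Subgroup G) : Prop :=
  ∃ B : Subgroup G, Function.Bijective (Monoid.Coprod.lift A.subtype B.subtype)

/-- `A` is a free factor of the subgroup `H` of `G`. -/
def IsFreeFactorIn {G : Type} [Group G] (A H : Subgroup G) : Prop :=
  A ≤ H ∧ IsFreeFactor (A.subgroupOf H)

/-- The subgroup `H` is a free group of rank `r`. -/
def HasRank {G : Type} [Group G] (H : Subgroup G) (r : ℕ) : Prop :=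
  Nonempty (FreeGroup (Fin r) ≃* H)

/-- The subgroup generated by the first `i` elements of the family `b`. -/
def prefixSubgroup {G : Type} [Group G] {n : ℕ} (b : Fin n → G) (i : ℕ) : Subgroup G :=
  Subgroup.closure (b '' {j | (j : ℕ) < i})

/-- `b` is an echelon basis for the subgroup `H`: it is a basis of the ambient group and
the ranks of the intersections with the prefix subgroups grow by at most one at each step. -/
def IsEchelonBasis {G : Type} [Group G] {n : ℕ} (b : Fin n → G) (H : Subgroup G) : Prop :=
  IsFreeBasis b ∧ ∀ i : Fin n, ∃ r r' : ℕ,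
    HasRank (H ⊓ prefixSubgroup b (i : ℕ)) r' ∧
    HasRank (H ⊓ prefixSubgroup b ((i : ℕ) + 1)) r ∧ r ≤ r' + 1

/-- `H` is an echelon subgroup: the ambient group admits an ordered basis which is an
echelon basis for `H`. -/
def IsEchelon {G : Type} [Group G] (H : Subgroup G) : Prop :=
  ∃ (m : ℕ) (b : Fin m → G), IsEchelonBasis b H

/-- `B` is the free factor support of `H`: the minimal (by inclusion) free factor containing `H`. -/
def IsFFSupport {G : Type} [Group G] (H B : Subgroup G) : Prop :=
  IsFreeFactor B ∧ H ≤ B ∧ ∀ B' : Subgroup G, IsFreeFactor B' → H ≤ B' → B ≤ B'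

noncomputable def a : FreeGroup (Fin 3) := FreeGroup.of 0

noncomputable def b : FreeGroup (Fin 3) := FreeGroup.of 1

noncomputable def c : FreeGroup (Fin 3) := FreeGroup.of 2

noncomputable def w : FreeGroup (Fin 3) := c ^ 2 * a ^ 2 * b ^ 2 * a ^ 2 * b ^ 2 * c ^ 2

noncomputable def H : Subgroup (FreeGroup (Fin 3)) := Subgroup.closure {a, b, w}

noncomputable def K : Subgroup (FreeGroup (Fin 3)) := Subgroup.closure {w * a⁻¹, a * w * b}


section Aux

open FreeGroup

theorem step_lemma {α : Type} [DecidableEq α] (x : α × Bool) (g : FreeGroup α)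
    (h : g.toWord.head? ≠ some (x.1, !x.2)) :
    (FreeGroup.mk [x] * g).toWord = x :: g.toWord := by
  conv_lhs => rw [← FreeGroup.mk_toWord (x := g)]
  rw [FreeGroup.mul_mk, FreeGroup.toWord_mk, List.singleton_append,
    FreeGroup.reduce.cons, FreeGroup.reduce_toWord]
  cases hw : g.toWord with
  | nil => simp
  | cons hd tl =>
    simp only []
    rw [if_neg]
    obtain ⟨x1, xb⟩ := x
    obtain ⟨h1, h2⟩ := hd
    rintro ⟨e1, e2⟩
    simp only at e1 e2
    subst e1; subst e2
    exact h (by rw [hw]; simp)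

theorem head_of_mul {α : Type} [DecidableEq α] (i : α) (g : FreeGroup α)
    (h : g.toWord.head? ≠ some (i, false)) :
    (FreeGroup.of i * g).toWord = (i, true) :: g.toWord :=
  step_lemma (i, true) g (by simpa using h)

theorem head_inv_mul {α : Type} [DecidableEq α] (i : α) (g : FreeGroup α)
    (h : g.toWord.head? ≠ some (i, true)) :
    ((FreeGroup.of i)⁻¹ * g).toWord = (i, false) :: g.toWord := by
  have e : (FreeGroup.of i)⁻¹ = FreeGroup.mk [(i, false)] := by
    rw [show FreeGroup.of i = FreeGroup.mk [(i, true)] from rfl, FreeGroup.inv_mk]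
    rfl
  rw [e]
  exact step_lemma (i, false) g (by simpa using h)

theorem hd_a (g : FreeGroup (Fin 3)) (h : g.toWord.head? ≠ some (0, false)) :
    (a * g).toWord = (0, true) :: g.toWord := head_of_mul 0 g h
theorem hd_b (g : FreeGroup (Fin 3)) (h : g.toWord.head? ≠ some (1, false)) :
    (b * g).toWord = (1, true) :: g.toWord := head_of_mul 1 g h
theorem hd_c (g : FreeGroup (Fin 3)) (h : g.toWord.head? ≠ some (2, false)) :
    (c * g).toWord = (2, true) :: g.toWord := head_of_mul 2 g h
theorem hd_a' (g : FreeGroup (Fin 3)) (h : g.toWord.head? ≠ some (0, true)) :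
    (a⁻¹ * g).toWord = (0, false) :: g.toWord := head_inv_mul 0 g h
theorem hd_b' (g : FreeGroup (Fin 3)) (h : g.toWord.head? ≠ some (1, true)) :
    (b⁻¹ * g).toWord = (1, false) :: g.toWord := head_inv_mul 1 g h
theorem hd_c' (g : FreeGroup (Fin 3)) (h : g.toWord.head? ≠ some (2, true)) :
    (c⁻¹ * g).toWord = (2, false) :: g.toWord := head_inv_mul 2 g h

theorem w_mul_head (g : FreeGroup (Fin 3)) (h : g.toWord.head? ≠ some (2, false)) :
    (w * g).toWord.head? = some (2, true) := by
  have ew : w * g = c * (c * (a * (a * (b * (b * (a * (a * (b * (b * (c * (c * g))))))))))) := by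
    simp only [w, pow_succ, pow_zero, one_mul, mul_assoc]
  have t1 := hd_c g h
  have t2 := hd_c _ (by rw [t1]; simp)
  have t3 := hd_b _ (by rw [t2]; simp)
  have t4 := hd_b _ (by rw [t3]; simp)
  have t5 := hd_a _ (by rw [t4]; simp)
  have t6 := hd_a _ (by rw [t5]; simp)
  have t7 := hd_b _ (by rw [t6]; simp)
  have t8 := hd_b _ (by rw [t7]; simp)
  have t9 := hd_a _ (by rw [t8]; simp)
  have t10 := hd_a _ (by rw [t9]; simp)
  have t11 := hd_c _ (by rw [t10]; simp)
  have t12 := hd_c _ (by rw [t11]; simp)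
  rw [ew, t12]
  simp

theorem w_inv_mul_head (g : FreeGroup (Fin 3)) (h : g.toWord.head? ≠ some (2, true)) :
    (w⁻¹ * g).toWord.head? = some (2, false) := by
  have ew : w⁻¹ * g =
      c⁻¹ * (c⁻¹ * (b⁻¹ * (b⁻¹ * (a⁻¹ * (a⁻¹ * (b⁻¹ * (b⁻¹ * (a⁻¹ * (a⁻¹ * (c⁻¹ * (c⁻¹ * g))))))))))) := by
    simp only [w]; group
  have t1 := hd_c' g h
  have t2 := hd_c' _ (by rw [t1]; simp)
  have t3 := hd_a' _ (by rw [t2]; simp)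
  have t4 := hd_a' _ (by rw [t3]; simp)
  have t5 := hd_b' _ (by rw [t4]; simp)
  have t6 := hd_b' _ (by rw [t5]; simp)
  have t7 := hd_a' _ (by rw [t6]; simp)
  have t8 := hd_a' _ (by rw [t7]; simp)
  have t9 := hd_b' _ (by rw [t8]; simp)
  have t10 := hd_b' _ (by rw [t9]; simp)
  have t11 := hd_c' _ (by rw [t10]; simp)
  have t12 := hd_c' _ (by rw [t11]; simp)
  rw [ew, t12]
  simp

/-- Ping pong sets: reduced words starting with a positive letter `i`. -/
noncomputable def Xs : Fin 3 → Set (FreeGroup (Fin 3)) := fun i =>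
  {g | g.toWord.head? = some (i, true)}
/-- Ping pong sets: reduced words starting with a negative letter `i`. -/
noncomputable def Ys : Fin 3 → Set (FreeGroup (Fin 3)) := fun i =>
  {g | g.toWord.head? = some (i, false)}

theorem inj_abw : Function.Injective (FreeGroup.lift ![a, b, w]) := by
  apply FreeGroup.injective_lift_of_ping_pong ![a, b, w] Xs Ys
  · intro i
    exact ⟨FreeGroup.of i, by simp [Xs, FreeGroup.toWord_of]⟩
  · intro i j hij
    show Disjoint (Xs i) (Xs j)
    rw [Set.disjoint_left]
    intro g hgi hgj
    simp only [Xs, Set.mem_setOf_eq] at hgi hgj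
    rw [hgi] at hgj
    simp at hgj
    exact hij hgj
  · intro i j hij
    show Disjoint (Ys i) (Ys j)
    rw [Set.disjoint_left]
    intro g hgi hgj
    simp only [Ys, Set.mem_setOf_eq] at hgi hgj
    rw [hgi] at hgj
    simp at hgj
    exact hij hgj
  · intro i j
    rw [Set.disjoint_left]
    intro g hgi hgj
    simp only [Xs, Ys, Set.mem_setOf_eq] at hgi hgj
    rw [hgi] at hgj
    simp at hgj
  · intro i
    fin_cases i
    · rintro x ⟨g, hg, rfl⟩
      have hg' : g.toWord.head? ≠ some (0, false) := by simpa [Ys] using hg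
      show (a * g) ∈ Xs 0
      simp only [Xs, Set.mem_setOf_eq, hd_a g hg']
      rfl
    · rintro x ⟨g, hg, rfl⟩
      have hg' : g.toWord.head? ≠ some (1, false) := by simpa [Ys] using hg
      show (b * g) ∈ Xs 1
      simp only [Xs, Set.mem_setOf_eq, hd_b g hg']
      rfl
    · rintro x ⟨g, hg, rfl⟩
      have hg' : g.toWord.head? ≠ some (2, false) := by simpa [Ys] using hg
      show (w * g) ∈ Xs 2
      simpa [Xs] using w_mul_head g hg'
  · intro i
    fin_cases i
    · rintro x ⟨g, hg, rfl⟩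
      have hg' : g.toWord.head? ≠ some (0, true) := by simpa [Xs] using hg
      show (a⁻¹ * g) ∈ Ys 0
      simp only [Ys, Set.mem_setOf_eq, hd_a' g hg']
      rfl
    · rintro x ⟨g, hg, rfl⟩
      have hg' : g.toWord.head? ≠ some (1, true) := by simpa [Xs] using hg
      show (b⁻¹ * g) ∈ Ys 1
      simp only [Ys, Set.mem_setOf_eq, hd_b' g hg']
      rfl
    · rintro x ⟨g, hg, rfl⟩
      have hg' : g.toWord.head? ≠ some (2, true) := by simpa [Xs] using hg
      show (w⁻¹ * g) ∈ Ys 2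
      simpa [Ys] using w_inv_mul_head g hg'

/-- The Nielsen transformation relating `(a, b, w)` to `(w a⁻¹, a w b, w)`. -/
noncomputable def phi : FreeGroup (Fin 3) →* FreeGroup (Fin 3) :=
  FreeGroup.lift ![of 2 * (of 0)⁻¹, of 0 * of 2 * of 1, of 2]
/-- The inverse Nielsen transformation. -/
noncomputable def psi : FreeGroup (Fin 3) →* FreeGroup (Fin 3) :=
  FreeGroup.lift ![(of 0)⁻¹ * of 2, (of 2)⁻¹ * (of 2)⁻¹ * of 0 * of 1, of 2]

theorem psi_phi : psi.comp phi = MonoidHom.id _ := by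
  ext i
  fin_cases i <;> simp [phi, psi] <;> group

theorem lift_comp_phi :
    (FreeGroup.lift ![a, b, w]).comp phi = FreeGroup.lift ![w * a⁻¹, a * w * b, w] := by
  ext i
  fin_cases i <;> simp [phi]

theorem inj_s : Function.Injective (FreeGroup.lift ![w * a⁻¹, a * w * b, w]) := by
  rw [← lift_comp_phi, MonoidHom.coe_comp]
  apply inj_abw.comp
  intro x y hxy
  have hc := congrArg psi hxy
  have h1 := DFunLike.congr_fun psi_phi x
  have h2 := DFunLike.congr_fun psi_phi y
  simp only [MonoidHom.comp_apply, MonoidHom.id_apply] at h1 h2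
  rwa [h1, h2] at hc

theorem closure_eq_H : Subgroup.closure {w * a⁻¹, a * w * b, w} = H := by
  rw [H]
  apply le_antisymm
  · apply Subgroup.closure_le _ |>.2
    rintro x (rfl | rfl | rfl)
    · exact mul_mem (Subgroup.subset_closure (by simp))
        (inv_mem (Subgroup.subset_closure (by simp)))
    · exact mul_mem (mul_mem (Subgroup.subset_closure (by simp))
        (Subgroup.subset_closure (by simp))) (Subgroup.subset_closure (by simp))
    · exact Subgroup.subset_closure (by simp)
  · apply Subgroup.closure_le _ |>.2
    have h1 : w * a⁻¹ ∈ Subgroup.closure {w * a⁻¹, a * w * b, w} :=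
      Subgroup.subset_closure (by simp)
    have h2 : a * w * b ∈ Subgroup.closure {w * a⁻¹, a * w * b, w} :=
      Subgroup.subset_closure (by simp)
    have h3 : w ∈ Subgroup.closure {w * a⁻¹, a * w * b, w} :=
      Subgroup.subset_closure (by simp)
    have ha : a ∈ Subgroup.closure {w * a⁻¹, a * w * b, w} := by
      have hm := mul_mem (inv_mem h1) h3
      have e : (w * a⁻¹)⁻¹ * w = a := by group
      rwa [e] at hm
    have hb : b ∈ Subgroup.closure {w * a⁻¹, a * w * b, w} := by
      have hm := mul_mem (mul_mem (inv_mem h3) (inv_mem ha)) h2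
      have e : w⁻¹ * a⁻¹ * (a * w * b) = b := by group
      rwa [e] at hm
    rintro x (rfl | rfl | rfl) <;> assumption

theorem range_s : Set.range ![w * a⁻¹, a * w * b, w] = {w * a⁻¹, a * w * b, w} := by
  ext g
  constructor
  · rintro ⟨i, rfl⟩; fin_cases i <;> simp
  · rintro (rfl | rfl | rfl)
    exacts [⟨0, rfl⟩, ⟨1, rfl⟩, ⟨2, rfl⟩]

noncomputable def j2 : Fin 2 → Fin 3 := ![0, 1]
noncomputable def j1 : Fin 1 → Fin 3 := ![2]
noncomputable def r2 : Fin 3 → Fin 2 := ![0, 1, 0]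
noncomputable def r1 : Fin 3 → Fin 1 := ![0, 0, 0]

theorem map_j2_inj :
    Function.Injective (FreeGroup.map j2 : FreeGroup (Fin 2) → FreeGroup (Fin 3)) := by
  have lih : ∀ x, FreeGroup.map r2 (FreeGroup.map j2 x) = x := by
    intro x
    rw [FreeGroup.map.comp]
    have e : (r2 ∘ j2) = id := by funext i; fin_cases i <;> rfl
    rw [e, FreeGroup.map.id]
  exact Function.LeftInverse.injective lih

theorem map_j1_inj :
    Function.Injective (FreeGroup.map j1 : FreeGroup (Fin 1) → FreeGroup (Fin 3)) := by
  have lih : ∀ x, FreeGroup.map r1 (FreeGroup.map j1 x) = x := by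
    intro x
    rw [FreeGroup.map.comp]
    have e : (r1 ∘ j1) = id := by funext i; fin_cases i; rfl
    rw [e, FreeGroup.map.id]
  exact Function.LeftInverse.injective lih

noncomputable def f2 : FreeGroup (Fin 2) →* FreeGroup (Fin 3) :=
  FreeGroup.lift ![w * a⁻¹, a * w * b]
noncomputable def f1 : FreeGroup (Fin 1) →* FreeGroup (Fin 3) := FreeGroup.lift ![w]

theorem f2_eq : f2 = (FreeGroup.lift ![w * a⁻¹, a * w * b, w]).comp (FreeGroup.map j2) := by
  ext i; fin_cases i <;> simp [f2, FreeGroup.map.of, j2]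

theorem f1_eq : f1 = (FreeGroup.lift ![w * a⁻¹, a * w * b, w]).comp (FreeGroup.map j1) := by
  ext i; fin_cases i; simp [f1, FreeGroup.map.of, j1]

theorem f2_inj : Function.Injective f2 := by
  rw [f2_eq, MonoidHom.coe_comp]; exact inj_s.comp map_j2_inj

theorem f1_inj : Function.Injective f1 := by
  rw [f1_eq, MonoidHom.coe_comp]; exact inj_s.comp map_j1_inj

theorem f2_range : Set.range ![w * a⁻¹, a * w * b] = {w * a⁻¹, a * w * b} := by
  ext g; constructor
  · rintro ⟨i, rfl⟩; fin_cases i <;> simp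
  · rintro (rfl | rfl); exacts [⟨0, rfl⟩, ⟨1, rfl⟩]

theorem K_eq_range : (f2.range : Subgroup (FreeGroup (Fin 3))) = K := by
  rw [f2, FreeGroup.range_lift_eq_closure, f2_range, K]

noncomputable def W : Subgroup (FreeGroup (Fin 3)) := Subgroup.closure {w}

theorem W_eq_range : (f1.range : Subgroup (FreeGroup (Fin 3))) = W := by
  rw [f1, FreeGroup.range_lift_eq_closure, W]
  congr 1
  ext g; constructor
  · rintro ⟨i, rfl⟩; fin_cases i; simp
  · rintro rfl; exact ⟨0, rfl⟩

theorem K_le_H : K ≤ H := by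
  rw [K, ← closure_eq_H]
  apply Subgroup.closure_le _ |>.2
  rintro x (rfl | rfl) <;> exact Subgroup.subset_closure (by simp)

theorem W_le_H : W ≤ H := by
  rw [W, ← closure_eq_H]
  apply Subgroup.closure_le _ |>.2
  rintro x rfl; exact Subgroup.subset_closure (by simp)

theorem f2_mem_K (z : FreeGroup (Fin 2)) : f2 z ∈ K := by
  rw [← K_eq_range]; exact ⟨z, rfl⟩
theorem f1_mem_W (z : FreeGroup (Fin 1)) : f1 z ∈ W := by
  rw [← W_eq_range]; exact ⟨z, rfl⟩

noncomputable def uK : FreeGroup (Fin 2) →* K := f2.codRestrict K f2_mem_K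

theorem uK_bij : Function.Bijective uK := by
  constructor
  · intro x y hxy
    exact f2_inj (congrArg (Subtype.val) hxy)
  · rintro ⟨x, hx⟩
    rw [← K_eq_range] at hx
    obtain ⟨z, hz⟩ := hx
    exact ⟨z, Subtype.ext hz⟩

theorem hasRankK : Nonempty (FreeGroup (Fin 2) ≃* K) := ⟨MulEquiv.ofBijective uK uK_bij⟩

noncomputable def uH : FreeGroup (Fin 3) →* H :=
  (FreeGroup.lift ![w * a⁻¹, a * w * b, w]).codRestrict H (fun z => by
    have hz : FreeGroup.lift ![w * a⁻¹, a * w * b, w] z ∈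
        (FreeGroup.lift ![w * a⁻¹, a * w * b, w]).range := ⟨z, rfl⟩
    rwa [FreeGroup.range_lift_eq_closure, range_s, closure_eq_H] at hz)

theorem uH_bij : Function.Bijective uH := by
  constructor
  · intro x y hxy; exact inj_s (congrArg Subtype.val hxy)
  · rintro ⟨x, hx⟩
    rw [← closure_eq_H, ← range_s, ← FreeGroup.range_lift_eq_closure] at hx
    obtain ⟨z, hz⟩ := hx
    exact ⟨z, Subtype.ext hz⟩

noncomputable def eH : FreeGroup (Fin 3) ≃* H := MulEquiv.ofBijective uH uH_bij

noncomputable def A : Subgroup H := K.subgroupOf H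
noncomputable def B : Subgroup H := W.subgroupOf H

noncomputable def uA : FreeGroup (Fin 2) →* A :=
  (f2.codRestrict H (fun z => K_le_H (f2_mem_K z))).codRestrict A (fun z => by
    rw [A, Subgroup.mem_subgroupOf]; exact f2_mem_K z)

noncomputable def uB : FreeGroup (Fin 1) →* B :=
  (f1.codRestrict H (fun z => W_le_H (f1_mem_W z))).codRestrict B (fun z => by
    rw [B, Subgroup.mem_subgroupOf]; exact f1_mem_W z)

theorem uA_bij : Function.Bijective uA := by
  constructor
  · intro x y hxy
    have h2 := congrArg (fun t : A => t.1.1) hxy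
    exact f2_inj h2
  · rintro ⟨⟨x, hxH⟩, hxA⟩
    rw [A, Subgroup.mem_subgroupOf] at hxA
    rw [← K_eq_range] at hxA
    obtain ⟨z, hz⟩ := hxA
    exact ⟨z, Subtype.ext (Subtype.ext hz)⟩

theorem uB_bij : Function.Bijective uB := by
  constructor
  · intro x y hxy
    have h2 := congrArg (fun t : B => t.1.1) hxy
    exact f1_inj h2
  · rintro ⟨⟨x, hxH⟩, hxB⟩
    rw [B, Subgroup.mem_subgroupOf] at hxB
    rw [← W_eq_range] at hxB
    obtain ⟨z, hz⟩ := hxB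
    exact ⟨z, Subtype.ext (Subtype.ext hz)⟩

noncomputable def eA : FreeGroup (Fin 2) ≃* A := MulEquiv.ofBijective uA uA_bij
noncomputable def eB : FreeGroup (Fin 1) ≃* B := MulEquiv.ofBijective uB uB_bij

open Monoid

noncomputable def Psi : Coprod (FreeGroup (Fin 2)) (FreeGroup (Fin 1)) →* FreeGroup (Fin 3) :=
  Coprod.lift (FreeGroup.map j2) (FreeGroup.map j1)

noncomputable def PsiInv :
    FreeGroup (Fin 3) →* Coprod (FreeGroup (Fin 2)) (FreeGroup (Fin 1)) :=
  FreeGroup.lift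
    ![Coprod.inl (FreeGroup.of 0), Coprod.inl (FreeGroup.of 1), Coprod.inr (FreeGroup.of 0)]

theorem Psi_PsiInv : Psi.comp PsiInv = MonoidHom.id _ := by
  ext i
  fin_cases i <;> simp [Psi, PsiInv, FreeGroup.map.of, j2, j1]

theorem PsiInv_Psi : PsiInv.comp Psi = MonoidHom.id _ := by
  apply Coprod.hom_ext
  · ext i
    fin_cases i <;>
      simp [Psi, PsiInv, FreeGroup.map.of, j2, j1, Coprod.lift_apply_inl]
  · ext i
    fin_cases i
    simp [Psi, PsiInv, FreeGroup.map.of, j2, j1, Coprod.lift_apply_inr]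

noncomputable def ePsi : Coprod (FreeGroup (Fin 2)) (FreeGroup (Fin 1)) ≃* FreeGroup (Fin 3) :=
  MonoidHom.toMulEquiv Psi PsiInv PsiInv_Psi Psi_PsiInv

noncomputable def Xi : Coprod (FreeGroup (Fin 2)) (FreeGroup (Fin 1)) ≃* Coprod A B :=
  MulEquiv.coprodCongr eA eB

theorem main_comp :
    (Coprod.lift A.subtype B.subtype).comp Xi.toMonoidHom
      = (eH.toMonoidHom).comp Psi := by
  apply Coprod.hom_ext
  · ext i
    fin_cases i <;>
      simp [Xi, Psi, eH, eA, uA, uH, f2, FreeGroup.map.of, j2,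
        MulEquiv.coprodCongr, Coprod.lift_apply_inl, Coprod.map_apply_inl]
  · ext i
    fin_cases i
    simp [Xi, Psi, eH, eB, uB, uH, f1, FreeGroup.map.of, j1, MulEquiv.coprodCongr,
      Coprod.lift_apply_inr, Coprod.map_apply_inr]

theorem Phi_bij : Function.Bijective (Coprod.lift A.subtype B.subtype) := by
  have key : ∀ q, (Coprod.lift A.subtype B.subtype) q = eH (Psi (Xi.symm q)) := by
    intro q
    have hq := DFunLike.congr_fun main_comp (Xi.symm q)
    simpa using hq
  have hfun : ⇑(Coprod.lift A.subtype B.subtype) = ⇑eH ∘ ⇑Psi ∘ ⇑Xi.symm := funext key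
  rw [hfun]
  have hPsi : Function.Bijective ⇑Psi := ePsi.bijective
  exact eH.bijective.comp (hPsi.comp Xi.symm.bijective)

end Aux

theorem statement17 :
    IsBasisOf ![w * a⁻¹, a * w * b, w] H ∧ IsFreeFactorIn K H ∧ HasRank K 2 := by
  refine ⟨⟨inj_s, ?_⟩, ⟨K_le_H, ?_⟩, hasRankK⟩
  · rw [range_s, closure_eq_H]
  · exact ⟨B, Phi_bij⟩
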